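/- Let m, n, N be positive integers and let q, q(1), ..., q(N) ∈ [1, ∞)^m be exponent vectors such that there exist θ_1, ..., θ_N ≥ 0 with θ_1 + ... + θ_N = 1 and 1/q_j = Σ_{k=1}^N θ_k / q_j(k) for each j ∈ {1,...,m} (i.e., (1/q_1,...,1/q_m) lies in the convex hull of the points (1/q_1(k),...,1/q_m(k))). Then for every scalar matrix a = (a_i)_{i ∈ M(m,n)} one has ‖a‖_q ≤ ∏_{k=1}^N ‖a‖_{q(k)}^{θ_k}. -/

import Mathlib

open scoped BigOperators

/-- The mixed norm `‖a‖_q` of a scalar matrix `a = (a_i)_{i ∈ {1,…,n}^m}` with respect to an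
exponent vector `q ∈ [1,∞)^m`, defined iteratively:
`‖a‖_q = (Σ_{i_1=1}^n ( … ( Σ_{i_m=1}^n |a_i|^{q_m} )^{q_{m-1}/q_m} … )^{q_1/q_2})^{1/q_1}`. -/
noncomputable def mixedNorm {𝕂 : Type*} [RCLike 𝕂] {n : ℕ} :
    {m : ℕ} → (Fin m → ℝ) → ((Fin m → Fin n) → 𝕂) → ℝ
  | 0, _, a => ‖a Fin.elim0‖
  | _ + 1, q, a =>
      (∑ i : Fin n,
          (mixedNorm (fun j => q j.succ) (fun v => a (Fin.cons i v))) ^ (q 0)) ^ (1 / q 0)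

lemma mixedNorm_nonneg' {𝕂 : Type*} [RCLike 𝕂] {n : ℕ} :
    ∀ {m : ℕ} (q : Fin m → ℝ) (a : (Fin m → Fin n) → 𝕂), 0 ≤ mixedNorm q a
  | 0, _, _ => norm_nonneg _
  | _ + 1, q, a => by
      simp only [mixedNorm]
      exact Real.rpow_nonneg (Finset.sum_nonneg fun i _ =>
        Real.rpow_nonneg (mixedNorm_nonneg' _ _) _) _

/-- Generalized Hölder / weighted AM–GM for sums:
`∑ i, ∏ k, g k i ^ w k ≤ ∏ k, (∑ i, g k i) ^ w k` for convex weights `w`. -/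
lemma geom_sum_le {ι κ : Type*} (s : Finset ι) (t : Finset κ) (w : κ → ℝ) (g : κ → ι → ℝ)
    (hw : ∀ k ∈ t, 0 ≤ w k) (hw1 : ∑ k ∈ t, w k = 1)
    (hg : ∀ k ∈ t, ∀ i ∈ s, 0 ≤ g k i) :
    ∑ i ∈ s, ∏ k ∈ t, g k i ^ w k ≤ ∏ k ∈ t, (∑ i ∈ s, g k i) ^ w k := by
  set S : κ → ℝ := fun k => ∑ i ∈ s, g k i with hSdef
  have hS : ∀ k ∈ t, 0 ≤ S k := fun k hk => Finset.sum_nonneg fun i hi => hg k hk i hi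
  by_cases hz : ∃ k ∈ t, 0 < w k ∧ S k = 0
  · obtain ⟨k0, hk0t, hw0, hS0⟩ := hz
    have hg0 : ∀ i ∈ s, g k0 i = 0 := by
      intro i hi
      have := (Finset.sum_eq_zero_iff_of_nonneg (fun i hi => hg k0 hk0t i hi)).mp hS0
      exact this i hi
    have hL : ∑ i ∈ s, ∏ k ∈ t, g k i ^ w k = 0 := by
      refine Finset.sum_eq_zero fun i hi => Finset.prod_eq_zero hk0t ?_
      rw [hg0 i hi, Real.zero_rpow hw0.ne']
    have hR : ∏ k ∈ t, (S k) ^ w k = 0 := by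
      refine Finset.prod_eq_zero hk0t ?_
      rw [hS0, Real.zero_rpow hw0.ne']
    rw [hL, hR]
  · push_neg at hz
    have hSpos : ∀ k ∈ t, 0 < w k → 0 < S k := by
      intro k hk hwk
      exact lt_of_le_of_ne (hS k hk) (Ne.symm (hz k hk hwk))
    set P : ℝ := ∏ k ∈ t, (S k) ^ w k with hPdef
    have hP : 0 ≤ P := Finset.prod_nonneg fun k hk => Real.rpow_nonneg (hS k hk) _
    have key : ∀ i ∈ s, ∏ k ∈ t, g k i ^ w k = P * ∏ k ∈ t, (g k i / S k) ^ w k := by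
      intro i hi
      rw [hPdef, ← Finset.prod_mul_distrib]
      refine Finset.prod_congr rfl fun k hk => ?_
      rcases eq_or_lt_of_le (hw k hk) with h0 | h0
      · simp [← h0]
      · have hSk := hSpos k hk h0
        rw [Real.div_rpow (hg k hk i hi) hSk.le]
        rw [mul_div_cancel₀ _ (ne_of_gt (Real.rpow_pos_of_pos hSk _))]
    calc ∑ i ∈ s, ∏ k ∈ t, g k i ^ w k
        = ∑ i ∈ s, P * ∏ k ∈ t, (g k i / S k) ^ w k := Finset.sum_congr rfl key
      _ ≤ ∑ i ∈ s, P * ∑ k ∈ t, w k * (g k i / S k) := by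
          refine Finset.sum_le_sum fun i hi => mul_le_mul_of_nonneg_left ?_ hP
          exact Real.geom_mean_le_arith_mean_weighted t w _ hw hw1
            (fun k hk => div_nonneg (hg k hk i hi) (hS k hk))
      _ = P * ∑ k ∈ t, ∑ i ∈ s, w k * (g k i / S k) := by
          rw [← Finset.mul_sum, Finset.sum_comm]
      _ = P := by
          have : ∑ k ∈ t, ∑ i ∈ s, w k * (g k i / S k) = 1 := by
            rw [← hw1]
            refine Finset.sum_congr rfl fun k hk => ?_
            rcases eq_or_lt_of_le (hw k hk) with h0 | h0
            · simp [← h0]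
            · have hSk := hSpos k hk h0
              simp only [mul_div_assoc, ← Finset.mul_sum, ← Finset.sum_div]
              rw [div_self hSk.ne', mul_one]
          rw [this, mul_one]

lemma holder_interpolative_aux {𝕂 : Type*} [RCLike 𝕂] {n N : ℕ} :
    ∀ {m : ℕ} (q : Fin m → ℝ) (Q : Fin N → Fin m → ℝ),
    (∀ j, 1 ≤ q j) → (∀ k j, 1 ≤ Q k j) →
    ∀ (θ : Fin N → ℝ), (∀ k, 0 ≤ θ k) → (∑ k : Fin N, θ k = 1) →
    (∀ j, 1 / q j = ∑ k : Fin N, θ k / Q k j) →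
    ∀ (a : (Fin m → Fin n) → 𝕂),
    mixedNorm q a ≤ ∏ k : Fin N, mixedNorm (Q k) a ^ θ k := by
  intro m
  induction m with
  | zero =>
      intro q Q hq hQ θ hθ hθ1 hconv a
      simp only [mixedNorm]
      rw [← Real.rpow_sum_of_nonneg (norm_nonneg _) (fun k _ => hθ k), hθ1, Real.rpow_one]
  | succ m ih =>
      intro q Q hq hQ θ hθ hθ1 hconv a
      set b : Fin n → ℝ := fun i => mixedNorm (fun j => q j.succ) (fun v => a (Fin.cons i v))
        with hbdef
      set c : Fin N → Fin n → ℝ :=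
        fun k i => mixedNorm (fun j => Q k j.succ) (fun v => a (Fin.cons i v)) with hcdef
      have hb0 : ∀ i, 0 ≤ b i := fun i => mixedNorm_nonneg' _ _
      have hc0 : ∀ k i, 0 ≤ c k i := fun k i => mixedNorm_nonneg' _ _
      have hq0 : (0:ℝ) < q 0 := lt_of_lt_of_le one_pos (hq 0)
      have hQ0 : ∀ k, (0:ℝ) < Q k 0 := fun k => lt_of_lt_of_le one_pos (hQ k 0)
      -- inductive bound on inner norms
      have hinner : ∀ i, b i ≤ ∏ k : Fin N, c k i ^ θ k := by
        intro i
        exact ih (fun j => q j.succ) (fun k j => Q k j.succ) (fun j => hq j.succ)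
          (fun k j => hQ k j.succ) θ hθ hθ1 (fun j => hconv j.succ) _
      set w : Fin N → ℝ := fun k => θ k * q 0 / Q k 0 with hwdef
      have hw0 : ∀ k, 0 ≤ w k :=
        fun k => div_nonneg (mul_nonneg (hθ k) hq0.le) (hQ0 k).le
      have hw1 : ∑ k : Fin N, w k = 1 := by
        have := hconv 0
        have h2 : ∑ k : Fin N, w k = q 0 * ∑ k : Fin N, θ k / Q k 0 := by
          rw [Finset.mul_sum]
          refine Finset.sum_congr rfl fun k _ => ?_
          rw [hwdef]; ring
        rw [h2, ← this, mul_one_div, div_self hq0.ne']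
      set g : Fin N → Fin n → ℝ := fun k i => c k i ^ Q k 0 with hgdef
      have hg0 : ∀ k i, 0 ≤ g k i := fun k i => Real.rpow_nonneg (hc0 k i) _
      have hstep : ∀ i, (∏ k : Fin N, c k i ^ θ k) ^ q 0 = ∏ k : Fin N, g k i ^ w k := by
        intro i
        rw [← Real.finset_prod_rpow _ _ (fun k _ => Real.rpow_nonneg (hc0 k i) _)]
        refine Finset.prod_congr rfl fun k _ => ?_
        simp only [hgdef, hwdef]
        rw [← Real.rpow_mul (hc0 k i), ← Real.rpow_mul (hc0 k i)]
        congr 1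
        rw [← mul_div_assoc, mul_div_cancel_left₀ _ (hQ0 k).ne']
      have hX0 : ∀ k, (0:ℝ) ≤ ∑ i : Fin n, g k i :=
        fun k => Finset.sum_nonneg fun i _ => hg0 k i
      have hsum0 : (0:ℝ) ≤ ∑ i : Fin n, (∏ k : Fin N, c k i ^ θ k) ^ q 0 :=
        Finset.sum_nonneg fun i _ => Real.rpow_nonneg
          (Finset.prod_nonneg fun k _ => Real.rpow_nonneg (hc0 k i) _) _
      have hmQ : ∀ k, mixedNorm (Q k) a = (∑ i : Fin n, g k i) ^ (1 / Q k 0) := by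
        intro k
        simp only [mixedNorm, hgdef, hcdef]
      have hmq : mixedNorm q a = (∑ i : Fin n, b i ^ q 0) ^ (1 / q 0) := by
        simp only [mixedNorm, hbdef]
      rw [hmq]
      calc (∑ i : Fin n, b i ^ q 0) ^ (1 / q 0)
          ≤ (∑ i : Fin n, (∏ k : Fin N, c k i ^ θ k) ^ q 0) ^ (1 / q 0) := by
            refine Real.rpow_le_rpow (Finset.sum_nonneg fun i _ =>
              Real.rpow_nonneg (hb0 i) _) ?_ (by positivity)
            exact Finset.sum_le_sum fun i _ =>
              Real.rpow_le_rpow (hb0 i) (hinner i) hq0.le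
        _ = (∑ i : Fin n, ∏ k : Fin N, g k i ^ w k) ^ (1 / q 0) := by
            rw [Finset.sum_congr rfl fun i _ => hstep i]
        _ ≤ (∏ k : Fin N, (∑ i : Fin n, g k i) ^ w k) ^ (1 / q 0) := by
            refine Real.rpow_le_rpow (Finset.sum_nonneg fun i _ =>
              Finset.prod_nonneg fun k _ => Real.rpow_nonneg (hg0 k i) _) ?_ (by positivity)
            exact geom_sum_le Finset.univ Finset.univ w g (fun k _ => hw0 k)
              hw1 (fun k _ i _ => hg0 k i)
        _ = ∏ k : Fin N, mixedNorm (Q k) a ^ θ k := by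
            rw [← Real.finset_prod_rpow _ _
              (fun k _ => Real.rpow_nonneg (hX0 k) _)]
            refine Finset.prod_congr rfl fun k _ => ?_
            rw [hmQ k, ← Real.rpow_mul (hX0 k), ← Real.rpow_mul (hX0 k)]
            congr 1
            rw [hwdef]
            field_simp

/-- **Hölder's inequality for multiple exponents (interpolative approach)**.

If `(1/q_1, …, 1/q_m)` lies in the convex hull of the points `(1/q_1(k), …, 1/q_m(k))`,
`k = 1, …, N`, with convex coefficients `θ_1, …, θ_N`, then
`‖a‖_q ≤ ∏_{k=1}^N ‖a‖_{q(k)}^{θ_k}` for every scalar matrix `a`. -/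
theorem holder_interpolative {𝕂 : Type*} [RCLike 𝕂] (m n N : ℕ) (hm : 0 < m) (hn : 0 < n)
    (hN : 0 < N) (q : Fin m → ℝ) (Q : Fin N → Fin m → ℝ)
    (hq : ∀ j, 1 ≤ q j) (hQ : ∀ k j, 1 ≤ Q k j)
    (θ : Fin N → ℝ) (hθ : ∀ k, 0 ≤ θ k) (hθ1 : ∑ k : Fin N, θ k = 1)
    (hconv : ∀ j, 1 / q j = ∑ k : Fin N, θ k / Q k j)
    (a : (Fin m → Fin n) → 𝕂) :
    mixedNorm q a ≤ ∏ k : Fin N, mixedNorm (Q k) a ^ θ k :=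
  holder_interpolative_aux q Q hq hQ θ hθ hθ1 hconv a
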